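/- For bases Δ, Δ' of Φ and admissible subsets Y ⊆ Δ, Y' ⊆ Δ', the face F_{Y'}^{Δ'} is contained in the closure of F_Y^Δ in A if and only if [λ₀(Δ') − λ₀(Δ)] ⊆ Y' and ⟨Y⟩ ⊆ ⟨Y'⟩. -/

import Mathlib

/-!
Common setup for Werner, "Compactifications of Bruhat-Tits buildings associated to
linear representations":  a finite-dimensional real vector space `A` (the apartment),
a root system `Φ` in the dual space together with a Weyl-group invariant inner
product, a finite Weyl-invariant set `Λ` of (K-)weights, and for every basis `Δ`
of `Φ` a highest weight `lam0 Δ ∈ Λ`.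
-/

open Pointwise Filter Topology Bornology
open scoped Classical

noncomputable section

/-- A set `M` of linear forms is *connected* if the graph with vertex set `M` and an
edge between `m` and `n` iff `inn m n ≠ 0` is connected. -/
def GraphConnected {D : Type*} (inn : D → D → ℝ) (M : Set D) : Prop :=
  ∀ m ∈ M, ∀ n ∈ M,
    Relation.ReflTransGen (fun x y => x ∈ M ∧ y ∈ M ∧ inn x y ≠ 0) m n

/-- The coefficients of `μ` as a linear combination of the elements of `Δ` (chosen
arbitrarily if one exists; it is unique when `Δ` is linearly independent). -/
noncomputable def coeffs {A : Type*} [AddCommGroup A] [Module ℝ A]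
    (Δ : Finset (Module.Dual ℝ A)) (μ : Module.Dual ℝ A) : Module.Dual ℝ A → ℝ :=
  if h : ∃ n : Module.Dual ℝ A → ℝ, μ = ∑ b ∈ Δ, n b • b then h.choose else fun _ => 0

/-- The support `[μ]` of `μ` with respect to the basis `Δ`: the set of elements of `Δ`
whose coefficient in `μ` is nonzero. -/
noncomputable def supp {A : Type*} [AddCommGroup A] [Module ℝ A]
    (Δ : Finset (Module.Dual ℝ A)) (μ : Module.Dual ℝ A) : Finset (Module.Dual ℝ A) :=
  Δ.filter fun a => coeffs Δ μ a ≠ 0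

/-- Raw data: a finite set `Φ` of roots in the dual of `A`, a product `inn` on the dual,
a finite set `Λ` of weights, and a highest weight `lam0 Δ` for every basis `Δ`. -/
structure RootWeightData (A : Type*) [NormedAddCommGroup A] [NormedSpace ℝ A]
    [FiniteDimensional ℝ A] where
  Φ : Finset (Module.Dual ℝ A)
  inn : Module.Dual ℝ A → Module.Dual ℝ A → ℝ
  Λ : Finset (Module.Dual ℝ A)
  lam0 : Finset (Module.Dual ℝ A) → Module.Dual ℝ A

namespace RootWeightData

variable {A : Type*} [NormedAddCommGroup A] [NormedSpace ℝ A] [FiniteDimensional ℝ A]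
variable (S : RootWeightData A)

/-- The reflection associated to the root `a`. -/
def refl (a : Module.Dual ℝ A) : Function.End (Module.Dual ℝ A) :=
  fun x => x - (2 * S.inn x a / S.inn a a) • a

/-- The Weyl group `W`, generated by the reflections in the roots. -/
def weyl : Submonoid (Function.End (Module.Dual ℝ A)) :=
  Submonoid.closure {f | ∃ a ∈ S.Φ, f = S.refl a}

/-- `Δ` is a basis of the root system `Φ`: a linearly independent subset of `Φ` such
that every root is a nonnegative or nonpositive linear combination of `Δ`. -/
def IsBase (Δ : Finset (Module.Dual ℝ A)) : Prop :=
  (↑Δ : Set (Module.Dual ℝ A)) ⊆ (S.Φ : Set (Module.Dual ℝ A)) ∧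
  LinearIndependent ℝ (fun a : (Δ : Set (Module.Dual ℝ A)) => (a : Module.Dual ℝ A)) ∧
  ∀ a ∈ S.Φ,
    (∃ n : Module.Dual ℝ A → ℝ, (∀ b ∈ Δ, 0 ≤ n b) ∧ a = ∑ b ∈ Δ, n b • b) ∨
    (∃ n : Module.Dual ℝ A → ℝ, (∀ b ∈ Δ, 0 ≤ n b) ∧ a = -∑ b ∈ Δ, n b • b)

/-- `Y` is an admissible subset of the basis `Δ`: `Y ⊆ Δ` and `Y ∪ {λ₀(Δ)}` is
connected. -/
def Admissible (Δ Y : Finset (Module.Dual ℝ A)) : Prop :=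
  Y ⊆ Δ ∧ GraphConnected S.inn ((↑Y : Set (Module.Dual ℝ A)) ∪ {S.lam0 Δ})

end RootWeightData

/-- The whole setting of Werner's paper: the data of `RootWeightData`, where `Φ` is a
(crystallographic, possibly non-reduced) root system spanning the dual of `A`, `inn` is
a Weyl-invariant inner product, `Λ` is a finite Weyl-invariant set of weights, and
`lam0` picks, Weyl-equivariantly, a highest weight for each basis, dominating all of
`Λ`; moreover a subset of a basis is admissible iff it is the support of
`λ₀(Δ) - λ` for some weight `λ`. -/
structure RootWeightSystem (A : Type*) [NormedAddCommGroup A] [NormedSpace ℝ A]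
    [FiniteDimensional ℝ A] extends RootWeightData A where
  inn_symm : ∀ x y, inn x y = inn y x
  inn_add_left : ∀ x y z, inn (x + y) z = inn x z + inn y z
  inn_smul_left : ∀ (c : ℝ) (x y), inn (c • x) y = c * inn x y
  inn_pos : ∀ x, x ≠ 0 → 0 < inn x x
  root_ne_zero : ∀ a ∈ Φ, a ≠ (0 : Module.Dual ℝ A)
  neg_mem : ∀ a ∈ Φ, -a ∈ Φ
  refl_mem : ∀ a ∈ Φ, ∀ b ∈ Φ, toRootWeightData.refl a b ∈ Φ
  inn_weyl_invariant :
    ∀ w ∈ toRootWeightData.weyl, ∀ x y, inn (w x) (w y) = inn x y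
  phi_spans : Submodule.span ℝ (Φ : Set (Module.Dual ℝ A)) = ⊤
  exists_base : ∃ Δ, toRootWeightData.IsBase Δ
  base_cover : ∀ x : A, ∃ Δ, toRootWeightData.IsBase Δ ∧ ∀ a ∈ Δ, 0 ≤ a x
  base_weyl : ∀ w ∈ toRootWeightData.weyl, ∀ Δ, toRootWeightData.IsBase Δ →
    toRootWeightData.IsBase (Δ.image (w : Module.Dual ℝ A → Module.Dual ℝ A))
  lam0_mem : ∀ Δ, toRootWeightData.IsBase Δ → lam0 Δ ∈ Λ
  lam0_dominates : ∀ Δ, toRootWeightData.IsBase Δ → ∀ l ∈ Λ,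
    ∃ n : Module.Dual ℝ A → ℝ, (∀ a ∈ Δ, 0 ≤ n a) ∧ lam0 Δ - l = ∑ a ∈ Δ, n a • a
  weight_weyl_invariant : ∀ w ∈ toRootWeightData.weyl, ∀ l ∈ Λ, w l ∈ Λ
  lam0_equivariant : ∀ w ∈ toRootWeightData.weyl, ∀ Δ, toRootWeightData.IsBase Δ →
    lam0 (Δ.image (w : Module.Dual ℝ A → Module.Dual ℝ A)) = w (lam0 Δ)
  integrality : ∀ l ∈ Λ, ∀ a ∈ Φ, ∃ k : ℤ, 2 * inn l a / inn a a = (k : ℝ)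
  admissible_iff_support : ∀ Δ, toRootWeightData.IsBase Δ → ∀ Y ⊆ Δ,
    (toRootWeightData.Admissible Δ Y ↔ ∃ l ∈ Λ, supp Δ (lam0 Δ - l) = Y)

namespace RootWeightSystem

variable {A : Type*} [NormedAddCommGroup A] [NormedSpace ℝ A] [FiniteDimensional ℝ A]
variable (S : RootWeightSystem A)

/-- The face `F_Y^Δ` of the apartment `A` associated to a basis `Δ` and an admissible
subset `Y ⊆ Δ`. -/
def Face (Δ Y : Finset (Module.Dual ℝ A)) : Set A :=
  {x | (∀ a ∈ Y, a x = 0) ∧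
    ∀ l ∈ S.Λ, ¬ supp Δ (S.lam0 Δ - l) ⊆ Y → 0 < (S.lam0 Δ - l) x}

/-- `F` belongs to the collection `Σ` of faces. -/
def IsFace (F : Set A) : Prop :=
  ∃ Δ Y, S.toRootWeightData.IsBase Δ ∧ S.toRootWeightData.Admissible Δ Y ∧
    F = S.Face Δ Y

/-- The collection `Σ` of all faces. -/
def Faces : Type _ := {F : Set A // S.IsFace F}

/-- The relation identifying `(F, u)` and `(F, v)` when `u - v ∈ ⟨F⟩`; the quotient is
the disjoint union `Ā = ⊔_{F ∈ Σ} A/⟨F⟩`. -/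
def AbarRel (p q : S.Faces × A) : Prop :=
  p.1 = q.1 ∧ p.2 - q.2 ∈ Submodule.span ℝ p.1.val

/-- The compactified apartment `Ā = ⊔_{F ∈ Σ} A_F`, `A_F = A/⟨F⟩`. -/
def Abar : Type _ := Quot S.AbarRel

/-- `r_F(u)`, the image of `u ∈ A` in the stratum `A_F` of `Ā`. -/
def mkAbar (F : S.Faces) (u : A) : S.Abar := Quot.mk _ (F, u)

/-- The basic set `Γ_F(U) = ⋃_{F' ⊆ cl F} r_{F'}(U + F)` of `Ā`. -/
def Gamma (F : S.Faces) (U : Set A) : Set S.Abar :=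
  {p | ∃ F' : S.Faces, F'.val ⊆ closure F.val ∧ ∃ u ∈ U + F.val, p = S.mkAbar F' u}

/-- The topology of `Ā`, generated by the sets `Γ_F(U)` for `F ∈ Σ` and `U ⊆ A`
bounded and open. -/
instance : TopologicalSpace S.Abar :=
  TopologicalSpace.generateFrom
    {V : Set S.Abar | ∃ (F : S.Faces) (U : Set A),
      IsOpen U ∧ IsBounded U ∧ V = S.Gamma F U}

/-- `f_Ω(a) = inf {t : Ω ⊆ cl_Ā {z ∈ A : a(z) ≥ -t}} ∈ ℝ ∪ {±∞}`, where `A` is embedded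
in `Ā` as the stratum of the face `F₀ = {0}`. -/
def fOmega (F₀ : S.Faces) (Ω : Set S.Abar) (a : Module.Dual ℝ A) : EReal :=
  sInf ((fun t : ℝ => (t : EReal)) ''
    {t : ℝ | Ω ⊆ closure (S.mkAbar F₀ '' {z : A | -t ≤ a z})})

end RootWeightSystem


variable {A : Type*} [NormedAddCommGroup A] [NormedSpace ℝ A] [FiniteDimensional ℝ A]

section AuxFace

lemma coeffs_spec0 {Δ : Finset (Module.Dual ℝ A)} {μ : Module.Dual ℝ A}
    (h : ∃ n : Module.Dual ℝ A → ℝ, μ = ∑ b ∈ Δ, n b • b) :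
    μ = ∑ b ∈ Δ, coeffs Δ μ b • b := by
  rw [coeffs, dif_pos h]
  exact h.choose_spec

lemma coeffs_unique0 {Δ : Finset (Module.Dual ℝ A)}
    (hind : LinearIndependent ℝ (fun a : (Δ : Set (Module.Dual ℝ A)) => (a : Module.Dual ℝ A)))
    {μ : Module.Dual ℝ A} {n : Module.Dual ℝ A → ℝ}
    (h : μ = ∑ b ∈ Δ, n b • b) : ∀ b ∈ Δ, coeffs Δ μ b = n b := by
  have h2 : μ = ∑ b ∈ Δ, coeffs Δ μ b • b := coeffs_spec0 ⟨n, h⟩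
  have h3 : ∑ b ∈ Δ, (coeffs Δ μ b - n b) • b = 0 := by
    have he : ∑ b ∈ Δ, (coeffs Δ μ b - n b) • b
        = (∑ b ∈ Δ, coeffs Δ μ b • b) - ∑ b ∈ Δ, n b • b := by
      rw [← Finset.sum_sub_distrib]
      exact Finset.sum_congr rfl fun b _ => by module
    rw [he, ← h2, ← h, sub_self]
  have h4 : ∑ b : (Δ : Set (Module.Dual ℝ A)),
      (coeffs Δ μ (b : Module.Dual ℝ A) - n (b : Module.Dual ℝ A)) •
        (b : Module.Dual ℝ A) = 0 := by
    rw [Finset.sum_finset_coe (f := fun b => (coeffs Δ μ b - n b) • b)]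
    exact h3
  intro b hb
  have h5 := Fintype.linearIndependent_iff.mp hind
      (fun a : (Δ : Set (Module.Dual ℝ A)) => coeffs Δ μ a - n a) h4 ⟨b, hb⟩
  have h6 : coeffs Δ μ b - n b = 0 := h5
  linarith

lemma eval_sum0 (Δ : Finset (Module.Dual ℝ A)) (n : Module.Dual ℝ A → ℝ) (x : A) :
    (∑ b ∈ Δ, n b • b) x = ∑ b ∈ Δ, n b * b x := by
  simp [LinearMap.sum_apply]

lemma exists_eval_eq0 {Δ : Finset (Module.Dual ℝ A)}
    (hind : LinearIndependent ℝ (fun a : (Δ : Set (Module.Dual ℝ A)) => (a : Module.Dual ℝ A)))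
    (c : Module.Dual ℝ A → ℝ) : ∃ x : A, ∀ a ∈ Δ, a x = c a := by
  classical
  have hind' : LinearIndepOn ℝ id (Δ : Set (Module.Dual ℝ A)) := hind
  let B := Module.Basis.extend hind'
  refine ⟨(Module.evalEquiv ℝ A).symm
      (∑ a ∈ Δ.attach, c a.1 • B.coord ⟨a.1, hind'.subset_extend _ a.2⟩),
    fun a ha => ?_⟩
  rw [Module.apply_evalEquiv_symm_apply, LinearMap.sum_apply]
  have key : ∀ p : {x // x ∈ Δ},
      (c p.1 • B.coord ⟨p.1, hind'.subset_extend _ p.2⟩) a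
        = if p.1 = a then c a else 0 := by
    intro p
    by_cases hpa : p.1 = a
    · subst hpa
      have ha' : B ⟨p.1, hind'.subset_extend _ p.2⟩ = p.1 := Module.Basis.extend_apply_self hind' _
      have hrepr : B.repr p.1 = Finsupp.single (⟨p.1, hind'.subset_extend _ p.2⟩ :
          {y // y ∈ hind'.extend (Set.subset_univ _)}) 1 := by
        conv_lhs => rw [← ha']
        rw [Module.Basis.repr_self]
      rw [if_pos rfl, LinearMap.smul_apply, Module.Basis.coord_apply, hrepr,
        Finsupp.single_eq_same, smul_eq_mul, mul_one]
    · have ha' : B ⟨a, hind'.subset_extend _ ha⟩ = a := Module.Basis.extend_apply_self hind' _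
      have hrepr : B.repr a = Finsupp.single (⟨a, hind'.subset_extend _ ha⟩ :
          {y // y ∈ hind'.extend (Set.subset_univ _)}) 1 := by
        conv_lhs => rw [← ha']
        rw [Module.Basis.repr_self]
      rw [if_neg hpa, LinearMap.smul_apply, Module.Basis.coord_apply, hrepr,
        Finsupp.single_apply, if_neg, smul_eq_mul, mul_zero]
      exact fun e => hpa (Subtype.ext_iff.mp e).symm
  rw [Finset.sum_congr rfl fun p _ => key p]
  rw [Finset.sum_eq_single (⟨a, ha⟩ : {x // x ∈ Δ})]
  · exact if_pos rfl
  · exact fun b _ hb => if_neg fun e => hb (Subtype.ext e)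
  · exact fun h => absurd (Finset.mem_attach _ _) h

variable (S : RootWeightSystem A)

lemma eval_eq_zero_of_supp_subset0 {Δ : Finset (Module.Dual ℝ A)}
    (hΔ : S.toRootWeightData.IsBase Δ) {Y : Finset (Module.Dual ℝ A)}
    {l : Module.Dual ℝ A} (hl : l ∈ S.Λ) {x : A}
    (hx : ∀ a ∈ Y, a x = 0) (hs : supp Δ (S.lam0 Δ - l) ⊆ Y) :
    (S.lam0 Δ - l) x = 0 := by
  obtain ⟨n, _, hrep⟩ := S.lam0_dominates Δ hΔ l hl
  have h2 : S.lam0 Δ - l = ∑ b ∈ Δ, coeffs Δ (S.lam0 Δ - l) b • b := coeffs_spec0 ⟨n, hrep⟩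
  rw [h2, eval_sum0]
  apply Finset.sum_eq_zero
  intro a ha
  by_cases hc : coeffs Δ (S.lam0 Δ - l) a = 0
  · rw [hc, zero_mul]
  · rw [hx a (hs (Finset.mem_filter.mpr ⟨ha, hc⟩)), mul_zero]

lemma face_nonempty0 {Δ Y : Finset (Module.Dual ℝ A)}
    (hΔ : S.toRootWeightData.IsBase Δ) (hYΔ : Y ⊆ Δ) :
    ∃ x, x ∈ S.Face Δ Y := by
  classical
  obtain ⟨x, hx⟩ := exists_eval_eq0 hΔ.2.1 (fun a => if a ∈ Y then 0 else 1)
  refine ⟨x, fun a ha => by rw [hx a (hYΔ ha), if_pos ha], ?_⟩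
  intro l hl hns
  obtain ⟨n, hn0, hnrep⟩ := S.lam0_dominates Δ hΔ l hl
  have hco := coeffs_unique0 hΔ.2.1 hnrep
  obtain ⟨b, hbsupp, hbY⟩ := Finset.not_subset.mp hns
  have hbΔ : b ∈ Δ := (Finset.mem_filter.mp hbsupp).1
  have hbne : coeffs Δ (S.lam0 Δ - l) b ≠ 0 := (Finset.mem_filter.mp hbsupp).2
  have hbpos : 0 < n b :=
    lt_of_le_of_ne (hn0 b hbΔ) fun e => hbne (by rw [hco b hbΔ, ← e])
  have hval : (S.lam0 Δ - l) x = ∑ a ∈ Δ, n a * a x := by rw [hnrep, eval_sum0]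
  rw [hval]
  refine Finset.sum_pos' (fun a haΔ => ?_) ⟨b, hbΔ, ?_⟩
  · rw [hx a haΔ]
    by_cases haY : a ∈ Y
    · rw [if_pos haY, mul_zero]
    · rw [if_neg haY, mul_one]; exact hn0 a haΔ
  · rw [hx b hbΔ, if_neg hbY, mul_one]; exact hbpos

lemma closure_face_subset0 {Δ Y : Finset (Module.Dual ℝ A)}
    (hΔ : S.toRootWeightData.IsBase Δ) :
    closure (S.Face Δ Y) ⊆
      {x : A | (∀ a ∈ Y, a x = 0) ∧ ∀ l ∈ S.Λ, 0 ≤ (S.lam0 Δ - l) x} := by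
  have hcont : ∀ f : Module.Dual ℝ A, Continuous f := fun f =>
    LinearMap.continuous_of_finiteDimensional f
  have hset : {x : A | (∀ a ∈ Y, a x = 0) ∧ ∀ l ∈ S.Λ, 0 ≤ (S.lam0 Δ - l) x} =
      (⋂ a ∈ (Y : Set (Module.Dual ℝ A)), {x : A | a x = 0}) ∩
        ⋂ l ∈ (S.Λ : Set (Module.Dual ℝ A)), {x : A | 0 ≤ (S.lam0 Δ - l) x} := by
    ext x; simp [Set.mem_iInter]
  have hclosed : IsClosed {x : A | (∀ a ∈ Y, a x = 0) ∧ ∀ l ∈ S.Λ, 0 ≤ (S.lam0 Δ - l) x} := by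
    rw [hset]
    exact IsClosed.inter
      (isClosed_biInter fun a _ => isClosed_eq (hcont a) continuous_const)
      (isClosed_biInter fun l _ => isClosed_le continuous_const (hcont _))
  refine closure_minimal (fun x hx => ⟨hx.1, fun l hl => ?_⟩) hclosed
  by_cases hs : supp Δ (S.lam0 Δ - l) ⊆ Y
  · exact le_of_eq (eval_eq_zero_of_supp_subset0 S hΔ hl hx.1 hs).symm
  · exact le_of_lt (hx.2 l hl hs)

lemma subset_closure_face0 {Δ Y : Finset (Module.Dual ℝ A)}
    (hΔ : S.toRootWeightData.IsBase Δ) (hYΔ : Y ⊆ Δ) {x : A}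
    (h1 : ∀ a ∈ Y, a x = 0) (h2 : ∀ l ∈ S.Λ, 0 ≤ (S.lam0 Δ - l) x) :
    x ∈ closure (S.Face Δ Y) := by
  obtain ⟨y, hy⟩ := face_nonempty0 S hΔ hYΔ
  have key : ∀ t : ℝ, 0 < t → t ≤ 1 → x + t • (y - x) ∈ S.Face Δ Y := by
    intro t ht ht1
    constructor
    · intro a ha
      simp [map_add, map_smul, map_sub, h1 a ha, hy.1 a ha]
    · intro l hl hns
      have hxl := h2 l hl
      have hyl := hy.2 l hl hns
      have he : (S.lam0 Δ - l) (x + t • (y - x)) =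
          (1 - t) * ((S.lam0 Δ - l) x) + t * ((S.lam0 Δ - l) y) := by
        simp only [map_add, map_smul, map_sub, smul_eq_mul]
        ring
      rw [he]
      nlinarith
  have htend : Filter.Tendsto (fun t : ℝ => x + t • (y - x)) (nhdsWithin 0 (Set.Ioi 0)) (𝓝 x) := by
    have hc : Continuous (fun t : ℝ => x + t • (y - x)) :=
      continuous_const.add (continuous_id.smul continuous_const)
    have hc0 := hc.tendsto 0
    simp only [zero_smul, add_zero] at hc0
    exact hc0.mono_left nhdsWithin_le_nhds
  refine mem_closure_of_tendsto htend ?_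
  have h1' : ∀ᶠ t : ℝ in nhdsWithin 0 (Set.Ioi 0), t < 1 :=
    eventually_nhdsWithin_of_eventually_nhds (eventually_lt_nhds (by norm_num))
  filter_upwards [self_mem_nhdsWithin, h1'] with t ht htl
  exact key t ht (le_of_lt htl)

end AuxFace

/-- `F_{Y'}^{Δ'}` is contained in the closure of `F_Y^Δ` in `A`
iff `[λ₀(Δ') - λ₀(Δ)] ⊆ Y'` and `⟨Y⟩ ⊆ ⟨Y'⟩`. -/
theorem face_subset_closure_face_iff (S : RootWeightSystem A)
    (Δ Δ' Y Y' : Finset (Module.Dual ℝ A))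
    (hΔ : S.toRootWeightData.IsBase Δ) (hΔ' : S.toRootWeightData.IsBase Δ')
    (hY : S.toRootWeightData.Admissible Δ Y)
    (hY' : S.toRootWeightData.Admissible Δ' Y') :
    S.Face Δ' Y' ⊆ closure (S.Face Δ Y) ↔
      (supp Δ' (S.lam0 Δ' - S.lam0 Δ) ⊆ Y' ∧
        Submodule.span ℝ ((Y : Set (Module.Dual ℝ A))) ≤
          Submodule.span ℝ ((Y' : Set (Module.Dual ℝ A)))) := by
  have hlam0Δ : S.lam0 Δ ∈ S.Λ := S.lam0_mem Δ hΔ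
  have hlam0Δ' : S.lam0 Δ' ∈ S.Λ := S.lam0_mem Δ' hΔ'
  constructor
  · intro h
    obtain ⟨x₀, hx₀⟩ := face_nonempty0 S hΔ' hY'.1
    have hx₀cl := closure_face_subset0 S hΔ (h hx₀)
    constructor
    · by_contra hns
      have hpos : 0 < (S.lam0 Δ' - S.lam0 Δ) x₀ := hx₀.2 (S.lam0 Δ) hlam0Δ hns
      have hge : 0 ≤ (S.lam0 Δ - S.lam0 Δ') x₀ := hx₀cl.2 (S.lam0 Δ') hlam0Δ'
      simp only [LinearMap.sub_apply] at hpos hge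
      linarith
    · rw [Submodule.span_le]
      intro a haY
      rw [SetLike.mem_coe]
      by_contra hnotin
      have haY' : a ∈ Y := haY
      have hW : (Submodule.span ℝ (Y' : Set (Module.Dual ℝ A))).dualCoannihilator.dualAnnihilator
          = Submodule.span ℝ (Y' : Set (Module.Dual ℝ A)) :=
        Subspace.dualCoannihilator_dualAnnihilator_eq
      have hnv : ¬ ∀ v ∈ (Submodule.span ℝ (Y' : Set (Module.Dual ℝ A))).dualCoannihilator,
          a v = 0 := by
        intro hv
        exact hnotin (hW ▸ (Submodule.mem_dualAnnihilator _).mpr (by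
          intro w hw
          exact hv w hw))
      push_neg at hnv
      obtain ⟨v, hv1, hv2⟩ := hnv
      have hvY' : ∀ b ∈ Y', b v = 0 := fun b hb =>
        (Submodule.mem_dualCoannihilator _).mp hv1 b (Submodule.subset_span hb)
      have hax₀ : a x₀ = 0 := hx₀cl.1 a haY'
      have hev : ∀ᶠ t : ℝ in nhdsWithin 0 (Set.Ioi 0), x₀ + t • v ∈ S.Face Δ' Y' := by
        have hall : ∀ l ∈ S.Λ, ∀ᶠ t : ℝ in 𝓝 0,
            ¬ supp Δ' (S.lam0 Δ' - l) ⊆ Y' → 0 < (S.lam0 Δ' - l) (x₀ + t • v) := by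
          intro l hl
          by_cases hs : supp Δ' (S.lam0 Δ' - l) ⊆ Y'
          · exact Filter.Eventually.of_forall fun t hns => absurd hs hns
          · have hpos0 : 0 < (S.lam0 Δ' - l) x₀ := hx₀.2 l hl hs
            have hc : Continuous fun t : ℝ =>
                (S.lam0 Δ' - l) x₀ + t * (S.lam0 Δ' - l) v :=
              continuous_const.add (continuous_id.mul continuous_const)
            have htd := hc.tendsto 0
            simp only [zero_mul, add_zero] at htd
            have hev0 : ∀ᶠ t : ℝ in 𝓝 0,
                0 < (S.lam0 Δ' - l) x₀ + t * (S.lam0 Δ' - l) v :=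
              htd.eventually (eventually_gt_nhds hpos0)
            refine hev0.mono fun t ht _ => ?_
            have heq : (S.lam0 Δ' - l) (x₀ + t • v) =
                (S.lam0 Δ' - l) x₀ + t * (S.lam0 Δ' - l) v := by
              simp [map_add, map_smul]
            rw [heq]
            exact ht
        have hall2 : ∀ᶠ t : ℝ in 𝓝 0, ∀ l ∈ S.Λ,
            ¬ supp Δ' (S.lam0 Δ' - l) ⊆ Y' → 0 < (S.lam0 Δ' - l) (x₀ + t • v) :=
          (Filter.eventually_all_finset S.Λ).mpr hall
        refine (eventually_nhdsWithin_of_eventually_nhds hall2).mono fun t ht => ⟨?_, ht⟩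
        intro b hb
        simp [map_add, map_smul, hx₀.1 b hb, hvY' b hb]
      obtain ⟨t, htF, htpos⟩ := (hev.and self_mem_nhdsWithin).exists
      have hcl := closure_face_subset0 S hΔ (h htF)
      have hz : a (x₀ + t • v) = 0 := hcl.1 a haY'
      rw [map_add, map_smul, hax₀, zero_add, smul_eq_mul] at hz
      rcases mul_eq_zero.mp hz with h0 | h0
      · exact absurd h0 (ne_of_gt htpos)
      · exact hv2 h0
  · rintro ⟨h1, h2⟩ x hx
    have hxY' : ∀ b ∈ Y', b x = 0 := hx.1
    have hzero : (S.lam0 Δ' - S.lam0 Δ) x = 0 :=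
      eval_eq_zero_of_supp_subset0 S hΔ' hlam0Δ hxY' h1
    refine subset_closure_face0 S hΔ hY.1 (fun a ha => ?_) (fun l hl => ?_)
    · have haspan : a ∈ Submodule.span ℝ (Y' : Set (Module.Dual ℝ A)) :=
        h2 (Submodule.subset_span ha)
      refine Submodule.span_induction (fun b hb => hxY' b hb) (by simp)
        (fun f g _ _ hf hg => by rw [LinearMap.add_apply, hf, hg, add_zero])
        (fun c f _ hf => by rw [LinearMap.smul_apply, hf, smul_zero]) haspan
    · have hge : 0 ≤ (S.lam0 Δ' - l) x := by
        by_cases hs : supp Δ' (S.lam0 Δ' - l) ⊆ Y'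
        · exact le_of_eq (eval_eq_zero_of_supp_subset0 S hΔ' hl hxY' hs).symm
        · exact le_of_lt (hx.2 l hl hs)
      have heq : (S.lam0 Δ - l) x = (S.lam0 Δ' - l) x - (S.lam0 Δ' - S.lam0 Δ) x := by
        simp only [LinearMap.sub_apply]
        ring
      rw [heq, hzero, sub_zero]
      exact hge
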